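/- (Balance property) For any intermediate point t ∈ (0,1), the normalized thermodynamic integral over [t,1] is the negative of that over [0,t]: ∫_t^1 ∫_Θ p_s(θ) log(p₁(θ)/p₀(θ)) dν(θ) ds = −∫_0^t ∫_Θ p_s(θ) log(p₁(θ)/p₀(θ)) dν(θ) ds. -/

import Mathlib

open MeasureTheory Real

/-- (Balance property) For any intermediate `t ∈ (0,1)`, the normalized thermodynamic
integral over `[t,1]` is the negative of that over `[0,t]`. -/
theorem NTI_balance_property
    {Θ : Type*} [MeasurableSpace Θ] (ν : Measure Θ) [SigmaFinite ν]
    (p0 p1 : Θ → ℝ)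
    (hp0pos : ∀ᵐ θ ∂ν, 0 < p0 θ) (hp1pos : ∀ᵐ θ ∂ν, 0 < p1 θ)
    (hp0int : ∫ θ, p0 θ ∂ν = 1) (hp1int : ∫ θ, p1 θ ∂ν = 1)
    (μc : ℝ → ℝ) (hμc : ∀ t, μc t = ∫ θ, p1 θ ^ t * p0 θ ^ (1 - t) ∂ν)
    (hμint : ∀ t ∈ Set.Icc (0:ℝ) 1,
      Integrable (fun θ => p1 θ ^ t * p0 θ ^ (1 - t)) ν)
    (hμpos : ∀ t ∈ Set.Icc (0:ℝ) 1, 0 < μc t)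
    (hdom : Integrable
      (fun x : ℝ × Θ =>
        (p1 x.2 ^ x.1 * p0 x.2 ^ (1 - x.1) / μc x.1) * |Real.log (p1 x.2 / p0 x.2)|)
      ((volume.restrict (Set.Icc (0:ℝ) 1)).prod ν))
    (t : ℝ) (ht : t ∈ Set.Ioo (0:ℝ) 1) :
    (∫ s in t..(1:ℝ), ∫ θ,
        (p1 θ ^ s * p0 θ ^ (1 - s) / μc s) * Real.log (p1 θ / p0 θ) ∂ν)
      = -(∫ s in (0:ℝ)..t, ∫ θ,
          (p1 θ ^ s * p0 θ ^ (1 - s) / μc s) * Real.log (p1 θ / p0 θ) ∂ν) := by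
  obtain ⟨ht0, ht1⟩ := ht
  have hgood : ∀ᵐ θ ∂ν, 0 < p0 θ ∧ 0 < p1 θ := hp0pos.and hp1pos
  -- integrability of p0 and p1
  have hp0i : Integrable p0 ν := by
    have h := hμint 0 (by norm_num)
    simpa using h
  have hp1i : Integrable p1 ν := by
    have h := hμint 1 (by norm_num)
    simpa using h
  have hLm : AEMeasurable (fun θ => Real.log (p1 θ / p0 θ)) ν :=
    Real.measurable_log.comp_aemeasurable (hp1i.aemeasurable.div hp0i.aemeasurable)
  -- exponential form of the geometric path
  have hform : ∀ᵐ θ ∂ν, ∀ x : ℝ, p1 θ ^ x * p0 θ ^ (1 - x)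
      = p0 θ * Real.exp (x * Real.log (p1 θ / p0 θ)) := by
    filter_upwards [hgood] with θ hθ
    obtain ⟨h0, h1⟩ := hθ
    intro x
    have e1 : p1 θ ^ x * p0 θ ^ (1 - x)
        = Real.exp (x * Real.log (p1 θ) + (1 - x) * Real.log (p0 θ)) := by
      rw [Real.rpow_def_of_pos h1, Real.rpow_def_of_pos h0, ← Real.exp_add]
      ring_nf
    have e2 : p0 θ * Real.exp (x * Real.log (p1 θ / p0 θ))
        = Real.exp (Real.log (p0 θ) + x * (Real.log (p1 θ) - Real.log (p0 θ))) := by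
      rw [Real.log_div h1.ne' h0.ne', Real.exp_add, Real.exp_log h0]
    rw [e1, e2]
    congr 1
    ring
  -- uniform bound on [0,1]
  have hbd01 : ∀ᵐ θ ∂ν, ∀ x ∈ Set.Icc (0:ℝ) 1,
      p1 θ ^ x * p0 θ ^ (1 - x) ≤ p0 θ + p1 θ := by
    filter_upwards [hgood, hform] with θ hθ hf x hx
    obtain ⟨h0, h1⟩ := hθ
    rw [hf x]
    have hconv : Real.exp (x * Real.log (p1 θ / p0 θ)) ≤ x * (p1 θ / p0 θ) + (1 - x) * 1 := by
      have h := convexOn_exp.2 (Set.mem_univ (Real.log (p1 θ / p0 θ)))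
        (Set.mem_univ (0:ℝ)) hx.1 (by linarith [hx.2] : (0:ℝ) ≤ 1 - x) (by ring)
      simp only [smul_eq_mul, mul_zero, add_zero, Real.exp_zero, mul_one] at h
      have hexplog : Real.exp (Real.log (p1 θ / p0 θ)) = p1 θ / p0 θ :=
        Real.exp_log (by positivity)
      rw [hexplog] at h
      linarith
    calc p0 θ * Real.exp (x * Real.log (p1 θ / p0 θ))
        ≤ p0 θ * (x * (p1 θ / p0 θ) + (1 - x) * 1) :=
          mul_le_mul_of_nonneg_left hconv h0.le
      _ = x * p1 θ + (1 - x) * p0 θ := by first | (field_simp; ring) | field_simp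
      _ ≤ p0 θ + p1 θ := by nlinarith [hx.1, hx.2]
  -- continuity of μc on [0,1]
  have hμceq : μc = fun x => ∫ θ, p1 θ ^ x * p0 θ ^ (1 - x) ∂ν := funext hμc
  have hμccont : ContinuousOn μc (Set.Icc 0 1) := by
    rw [hμceq]
    intro x₀ hx₀
    apply continuousWithinAt_of_dominated (bound := fun θ => p0 θ + p1 θ)
    · exact eventually_mem_nhdsWithin.mono fun x hx => (hμint x hx).1
    · refine eventually_mem_nhdsWithin.mono fun x hx => ?_
      filter_upwards [hbd01, hgood] with θ hb hθ
      have hnn : 0 ≤ p1 θ ^ x * p0 θ ^ (1 - x) :=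
        mul_nonneg (Real.rpow_nonneg hθ.2.le x) (Real.rpow_nonneg hθ.1.le (1 - x))
      rw [Real.norm_eq_abs, abs_of_nonneg hnn]
      exact hb x hx
    · exact hp0i.add hp1i
    · filter_upwards [hform] with θ hf
      have : (fun x : ℝ => p1 θ ^ x * p0 θ ^ (1 - x))
          = fun x => p0 θ * Real.exp (x * Real.log (p1 θ / p0 θ)) := funext hf
      rw [this]
      exact (continuous_const.mul (Real.continuous_exp.comp
        (continuous_id.mul continuous_const))).continuousWithinAt
  -- values at the endpoints
  have hμc0 : μc 0 = 1 := by
    rw [hμc]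
    simpa using hp0int
  have hμc1 : μc 1 = 1 := by
    rw [hμc]
    simpa using hp1int
  -- product-measurability and integrability of the inner integrand
  set ρ : Measure ℝ := volume.restrict (Set.Icc (0:ℝ) 1) with hρ
  have hsnd : Measure.QuasiMeasurePreserving (Prod.snd : ℝ × Θ → Θ) (ρ.prod ν) ν :=
    Measure.quasiMeasurePreserving_snd
  have hfst : Measure.QuasiMeasurePreserving (Prod.fst : ℝ × Θ → ℝ) (ρ.prod ν) ρ :=
    Measure.quasiMeasurePreserving_fst
  have hA0 : AEMeasurable (fun x : ℝ × Θ => p0 x.2) (ρ.prod ν) :=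
    hp0i.aemeasurable.comp_quasiMeasurePreserving hsnd
  have hAL : AEMeasurable (fun x : ℝ × Θ => Real.log (p1 x.2 / p0 x.2)) (ρ.prod ν) :=
    hLm.comp_quasiMeasurePreserving hsnd
  have hAμ : AEMeasurable (fun x : ℝ × Θ => μc x.1) (ρ.prod ν) :=
    (hμccont.aemeasurable measurableSet_Icc).comp_quasiMeasurePreserving hfst
  have hformprod : ∀ᵐ x ∂(ρ.prod ν), p1 x.2 ^ x.1 * p0 x.2 ^ (1 - x.1)
      = p0 x.2 * Real.exp (x.1 * Real.log (p1 x.2 / p0 x.2)) := by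
    have := hsnd.ae hform
    filter_upwards [this] with x hx using hx x.1
  have hApath : AEMeasurable (fun x : ℝ × Θ => p1 x.2 ^ x.1 * p0 x.2 ^ (1 - x.1))
      (ρ.prod ν) := by
    exact (hA0.mul (Real.measurable_exp.comp_aemeasurable
      (measurable_fst.aemeasurable.mul hAL))).congr
      (hformprod.mono fun x hx => hx.symm)
  have hΦmeas : AEStronglyMeasurable
      (fun x : ℝ × Θ =>
        (p1 x.2 ^ x.1 * p0 x.2 ^ (1 - x.1) / μc x.1) * Real.log (p1 x.2 / p0 x.2))
      (ρ.prod ν) := ((hApath.div hAμ).mul hAL).aestronglyMeasurable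
  have haeprod_pos : ∀ᵐ x ∂(ρ.prod ν),
      0 ≤ p1 x.2 ^ x.1 * p0 x.2 ^ (1 - x.1) / μc x.1 := by
    have h1 : ∀ᵐ x ∂(ρ.prod ν), x.1 ∈ Set.Icc (0:ℝ) 1 :=
      hfst.ae (ae_restrict_mem measurableSet_Icc)
    have h2 : ∀ᵐ x ∂(ρ.prod ν), 0 < p0 x.2 ∧ 0 < p1 x.2 := hsnd.ae hgood
    filter_upwards [h1, h2] with x hx h2x
    have hμx := hμpos x.1 hx
    have := h2x.1
    have := h2x.2
    positivity
  have hΦint : Integrable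
      (fun x : ℝ × Θ =>
        (p1 x.2 ^ x.1 * p0 x.2 ^ (1 - x.1) / μc x.1) * Real.log (p1 x.2 / p0 x.2))
      (ρ.prod ν) := by
    refine hdom.mono' hΦmeas ?_
    filter_upwards [haeprod_pos] with x hx
    rw [Real.norm_eq_abs, abs_mul, abs_of_nonneg hx]
  have hFint : IntegrableOn
      (fun s => ∫ θ, (p1 θ ^ s * p0 θ ^ (1 - s) / μc s) * Real.log (p1 θ / p0 θ) ∂ν)
      (Set.Icc (0:ℝ) 1) volume := hΦint.integral_prod_left
  -- derivative of μc on (0,1)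
  have hderiv : ∀ s ∈ Set.Ioo (0:ℝ) 1, HasDerivAt μc
      (∫ θ, p1 θ ^ s * p0 θ ^ (1 - s) * Real.log (p1 θ / p0 θ) ∂ν) s := by
    intro s hs
    obtain ⟨hs0, hs1⟩ := hs
    set ε : ℝ := min s (1 - s) / 2 with hεdef
    have hε0 : 0 < ε := by
      have : 0 < min s (1 - s) := lt_min hs0 (by linarith)
      positivity
    have hε2s : 2 * ε ≤ s := by
      have := min_le_left s (1 - s); rw [hεdef]; linarith
    have hε2s' : 2 * ε ≤ 1 - s := by
      have := min_le_right s (1 - s); rw [hεdef]; linarith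
    have hball : ∀ x ∈ Metric.ball s ε, x - ε ∈ Set.Icc (0:ℝ) 1 ∧
        x + ε ∈ Set.Icc (0:ℝ) 1 ∧ x ∈ Set.Icc (0:ℝ) 1 := by
      intro x hx
      rw [Metric.mem_ball, Real.dist_eq] at hx
      have := abs_lt.1 hx
      constructor
      · constructor <;> [linarith; linarith]
      constructor
      · constructor <;> [linarith; linarith]
      · constructor <;> [linarith; linarith]
    have hF_meas : ∀ᶠ x in nhds s,
        AEStronglyMeasurable (fun θ => p1 θ ^ x * p0 θ ^ (1 - x)) ν := by
      refine Filter.eventually_of_mem (Metric.ball_mem_nhds s hε0) fun x hx => ?_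
      exact (hμint x (hball x hx).2.2).1
    have hF_int : Integrable (fun θ => p1 θ ^ s * p0 θ ^ (1 - s)) ν :=
      hμint s ⟨hs0.le, hs1.le⟩
    have hF'_meas : AEStronglyMeasurable
        (fun θ => p1 θ ^ s * p0 θ ^ (1 - s) * Real.log (p1 θ / p0 θ)) ν :=
      (hF_int.aemeasurable.mul hLm).aestronglyMeasurable
    have h_bound : ∀ᵐ θ ∂ν, ∀ x ∈ Metric.ball s ε,
        ‖p1 θ ^ x * p0 θ ^ (1 - x) * Real.log (p1 θ / p0 θ)‖
          ≤ (2 / ε) * (p0 θ + p1 θ) := by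
      filter_upwards [hgood, hform, hbd01] with θ hθ hf hb x hx
      obtain ⟨h0, h1⟩ := hθ
      set Lθ : ℝ := Real.log (p1 θ / p0 θ) with hLθ
      obtain ⟨hmem1, hmem2, hmem3⟩ := hball x hx
      -- |Lθ| ≤ (exp (ε Lθ) + exp (-(ε Lθ)))/ε
      have hkey : ε * |Lθ| ≤ Real.exp (ε * Lθ) + Real.exp (-(ε * Lθ)) := by
        have habs : ε * |Lθ| = |ε * Lθ| := by
          rw [abs_mul, abs_of_pos hε0]
        have h2 : Real.exp |ε * Lθ| ≤ Real.exp (ε * Lθ) + Real.exp (-(ε * Lθ)) := by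
          rcases abs_cases (ε * Lθ) with ⟨h, _⟩ | ⟨h, _⟩ <;> rw [h]
          · exact le_add_of_nonneg_right (Real.exp_pos _).le
          · exact le_add_of_nonneg_left (Real.exp_pos _).le
        have h3 : |ε * Lθ| ≤ Real.exp |ε * Lθ| := by
          have := Real.add_one_le_exp |ε * Lθ|
          linarith [abs_nonneg (ε * Lθ)]
        linarith [habs ▸ (h3.trans h2)]
      have hxe1 : p0 θ * Real.exp ((x + ε) * Lθ) ≤ p0 θ + p1 θ := by
        have := hb (x + ε) hmem2
        rw [hf (x + ε)] at this
        exact this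
      have hxe2 : p0 θ * Real.exp ((x - ε) * Lθ) ≤ p0 θ + p1 θ := by
        have := hb (x - ε) hmem1
        rw [hf (x - ε)] at this
        exact this
      rw [Real.norm_eq_abs, abs_mul, hf x,
        abs_of_nonneg (by positivity : (0:ℝ) ≤ p0 θ * Real.exp (x * Lθ))]
      have hsplit : p0 θ * Real.exp (x * Lθ) * (Real.exp (ε * Lθ) + Real.exp (-(ε * Lθ)))
          = p0 θ * Real.exp ((x + ε) * Lθ) + p0 θ * Real.exp ((x - ε) * Lθ) := by
        rw [mul_add, mul_assoc, mul_assoc, ← Real.exp_add, ← Real.exp_add]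
        ring_nf
      have hmain : p0 θ * Real.exp (x * Lθ) * (ε * |Lθ|)
          ≤ 2 * (p0 θ + p1 θ) := by
        calc p0 θ * Real.exp (x * Lθ) * (ε * |Lθ|)
            ≤ p0 θ * Real.exp (x * Lθ) * (Real.exp (ε * Lθ) + Real.exp (-(ε * Lθ))) :=
              mul_le_mul_of_nonneg_left hkey (by positivity)
          _ = p0 θ * Real.exp ((x + ε) * Lθ) + p0 θ * Real.exp ((x - ε) * Lθ) := hsplit
          _ ≤ 2 * (p0 θ + p1 θ) := by linarith
      rw [div_mul_eq_mul_div, le_div_iff₀ hε0]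
      calc p0 θ * Real.exp (x * Lθ) * |Lθ| * ε
          = p0 θ * Real.exp (x * Lθ) * (ε * |Lθ|) := by ring
        _ ≤ 2 * (p0 θ + p1 θ) := hmain
    have h_bound_int : Integrable (fun θ => (2 / ε) * (p0 θ + p1 θ)) ν :=
      (hp0i.add hp1i).const_mul _
    have h_diff : ∀ᵐ θ ∂ν, ∀ x ∈ Metric.ball s ε,
        HasDerivAt (fun y => p1 θ ^ y * p0 θ ^ (1 - y))
          (p1 θ ^ x * p0 θ ^ (1 - x) * Real.log (p1 θ / p0 θ)) x := by
      filter_upwards [hform] with θ hf x _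
      have hrw : (fun y : ℝ => p1 θ ^ y * p0 θ ^ (1 - y))
          = fun y => p0 θ * Real.exp (y * Real.log (p1 θ / p0 θ)) := funext hf
      rw [hrw, hf x]
      have h : HasDerivAt (fun y => p0 θ * Real.exp (y * Real.log (p1 θ / p0 θ)))
          (p0 θ * (Real.exp (x * Real.log (p1 θ / p0 θ)) * Real.log (p1 θ / p0 θ))) x :=
        ((hasDerivAt_mul_const (Real.log (p1 θ / p0 θ))).exp (x := x)).const_mul (p0 θ)
      convert h using 1
      ring
    have H := (hasDerivAt_integral_of_dominated_loc_of_deriv_le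
      (F := fun x θ => p1 θ ^ x * p0 θ ^ (1 - x))
      (F' := fun x θ => p1 θ ^ x * p0 θ ^ (1 - x) * Real.log (p1 θ / p0 θ))
      (bound := fun θ => (2 / ε) * (p0 θ + p1 θ))
      (Metric.ball_mem_nhds s hε0) hF_meas hF_int hF'_meas h_bound h_bound_int h_diff).2
    rw [hμceq]
    exact H
  -- derivative of log ∘ μc
  have hlogd : ∀ s ∈ Set.Ioo (0:ℝ) 1, HasDerivAt (fun x => Real.log (μc x))
      (∫ θ, (p1 θ ^ s * p0 θ ^ (1 - s) / μc s) * Real.log (p1 θ / p0 θ) ∂ν) s := by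
    intro s hs
    have h := (hderiv s hs).log (hμpos s ⟨hs.1.le, hs.2.le⟩).ne'
    have heq : (fun θ => (p1 θ ^ s * p0 θ ^ (1 - s) / μc s) * Real.log (p1 θ / p0 θ))
        = fun θ => (p1 θ ^ s * p0 θ ^ (1 - s) * Real.log (p1 θ / p0 θ)) / μc s := by
      funext θ; ring
    rw [heq, integral_div]
    exact h
  -- FTC on subintervals of [0,1]
  have key : ∀ a b : ℝ, 0 ≤ a → a ≤ b → b ≤ 1 →
      (∫ s in a..b, ∫ θ,
        (p1 θ ^ s * p0 θ ^ (1 - s) / μc s) * Real.log (p1 θ / p0 θ) ∂ν)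
      = Real.log (μc b) - Real.log (μc a) := by
    intro a b ha hab hb1
    have hsub : Set.Icc a b ⊆ Set.Icc (0:ℝ) 1 := Set.Icc_subset_Icc ha hb1
    apply intervalIntegral.integral_eq_sub_of_hasDeriv_right_of_le hab
    · exact (hμccont.mono hsub).log fun x hx => (hμpos x (hsub hx)).ne'
    · intro x hx
      exact (hlogd x ⟨lt_of_le_of_lt ha hx.1, lt_of_lt_of_le hx.2 hb1⟩).hasDerivWithinAt
    · exact (intervalIntegrable_iff_integrableOn_Icc_of_le hab).2 (hFint.mono_set hsub)
  have H1 := key t 1 ht0.le ht1.le le_rfl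
  have H2 := key 0 t le_rfl ht0.le ht1.le
  rw [H1, H2, hμc0, hμc1, Real.log_one]
  ring
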